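/- Let E_θ: ℝ^{d_x} → ℝ be an energy function with Z_θ = ∫ exp(−E_θ(x)) dx < ∞ and π_θ(x) = exp(−E_θ(x))/Z_θ, and let E₀: ℝ^{d_x} → ℝ be a fixed reference energy with Z₀ = ∫ exp(−E₀(x)) dx < ∞ and π₀(x) = exp(−E₀(x))/Z₀, with KL(π_θ ‖ π₀) < ∞. Fix θ and assume differentiability of θ′ ↦ E_{θ′}(x) at θ for every x together with domination hypotheses permitting differentiation under the integral sign for Z_{θ′} and for θ′ ↦ ∫ (E₀(x) − E_{θ′}(x)) π_{θ′}(x) dx, with (E_θ − E₀)∇_θE_θ and ∇_θE_θ integrable under π_θ. Then ∇_θ KL(π_θ ‖ π₀) = E_{π_θ}[ (E_θ(X) − E₀(X)) ∇_θE_θ(X) ] − E_{π_θ}[E_θ(X) − E₀(X)] · E_{π_θ}[∇_θE_θ(X)]. -/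

import Mathlib

open MeasureTheory

noncomputable section

open InnerProductSpace

private lemma ebm_aux_fderiv_apply_measurable {dx dθ : ℕ}
    (En : EuclideanSpace ℝ (Fin dθ) → EuclideanSpace ℝ (Fin dx) → ℝ)
    (hEn_meas : ∀ t, Measurable (En t))
    (θ : EuclideanSpace ℝ (Fin dθ))
    (hdiff : ∀ x, DifferentiableAt ℝ (fun s => En s x) θ)
    (v : EuclideanSpace ℝ (Fin dθ)) :
    Measurable fun x => fderiv ℝ (fun s => En s x) θ v := by
  set u : ℕ → ℝ := fun n => ((n : ℝ) + 1)⁻¹ with hu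
  have hupos : ∀ n, 0 < u n := fun n => by positivity
  have hulim : Filter.Tendsto u Filter.atTop (nhdsWithin (0:ℝ) {(0:ℝ)}ᶜ) := by
    refine tendsto_nhdsWithin_of_tendsto_nhds_of_eventually_within _ ?_ ?_
    · have := tendsto_one_div_add_atTop_nhds_zero_nat (𝕜 := ℝ)
      simpa [hu, one_div] using this
    · exact Filter.Eventually.of_forall fun n =>
        Set.mem_compl_singleton_iff.2 (ne_of_gt (hupos n))
  apply measurable_of_tendsto_metrizable
    (f := fun n x => (u n)⁻¹ * (En (θ + u n • v) x - En θ x))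
  · intro n
    exact (((hEn_meas _).sub (hEn_meas θ))).const_mul _
  · rw [tendsto_pi_nhds]
    intro x
    have hline : HasDerivAt (fun r : ℝ => θ + r • v) v 0 := by
      simpa using ((hasDerivAt_id (0:ℝ)).smul_const v).const_add θ
    have hcomp : HasDerivAt (fun r : ℝ => En (θ + r • v) x)
        (fderiv ℝ (fun s => En s x) θ v) 0 := by
      have hd : HasFDerivAt (fun s => En s x) (fderiv ℝ (fun s => En s x) θ)
          (θ + (0:ℝ) • v) := by simpa using (hdiff x).hasFDerivAt
      exact hd.comp_hasDerivAt 0 hline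
    have hslope := hasDerivAt_iff_tendsto_slope.1 hcomp
    have := hslope.comp hulim
    refine this.congr fun n => ?_
    simp [Function.comp, slope, hu, sub_zero, vsub_eq_sub, div_eq_inv_mul]

private lemma ebm_aux_grad_measurable {dx dθ : ℕ}
    (En : EuclideanSpace ℝ (Fin dθ) → EuclideanSpace ℝ (Fin dx) → ℝ)
    (hEn_meas : ∀ t, Measurable (En t))
    (θ : EuclideanSpace ℝ (Fin dθ))
    (hdiff : ∀ x, DifferentiableAt ℝ (fun s => En s x) θ) :
    Measurable fun x => gradient (fun s => En s x) θ := by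
  set b := EuclideanSpace.basisFun (Fin dθ) ℝ with hb
  have key : ∀ x, gradient (fun s => En s x) θ
      = ∑ i, (fderiv ℝ (fun s => En s x) θ (b i)) • b i := by
    intro x
    conv_lhs => rw [← b.sum_repr' (gradient (fun s => En s x) θ)]
    refine Finset.sum_congr rfl fun i _ => ?_
    congr 1
    rw [real_inner_comm]
    exact toDual_symm_apply
  simp_rw [key]
  exact Finset.measurable_sum _ fun i _ =>
    (ebm_aux_fderiv_apply_measurable En hEn_meas θ hdiff (b i)).smul_const (b i)

/-- The energy-based probability density `π_θ(x) = exp(−E_θ(x))/Z_θ`. -/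
def ebmDensity {dx dθ : ℕ}
    (En : EuclideanSpace ℝ (Fin dθ) → EuclideanSpace ℝ (Fin dx) → ℝ)
    (t : EuclideanSpace ℝ (Fin dθ)) (x : EuclideanSpace ℝ (Fin dx)) : ℝ :=
  Real.exp (-En t x) / ∫ y, Real.exp (-En t y)

/-- A fixed reference energy-based density `π₀(x) = exp(−E₀(x))/Z₀`. -/
def refDensity {dx : ℕ} (E₀ : EuclideanSpace ℝ (Fin dx) → ℝ)
    (x : EuclideanSpace ℝ (Fin dx)) : ℝ :=
  Real.exp (-E₀ x) / ∫ y, Real.exp (-E₀ y)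

set_option maxHeartbeats 2000000 in
set_option synthInstance.maxHeartbeats 1000000 in
/-- Gradient of the reverse KL divergence of an EBM from a fixed reference:
`∇_θ KL(π_θ ‖ π₀) = E_{π_θ}[(E_θ − E₀)∇_θE_θ] − E_{π_θ}[E_θ − E₀]·E_{π_θ}[∇_θE_θ]`. -/
theorem ebm_gradient_reverse_kl
    {dx dθ : ℕ}
    (En : EuclideanSpace ℝ (Fin dθ) → EuclideanSpace ℝ (Fin dx) → ℝ)
    (hEn_meas : ∀ t, Measurable (En t))
    (hZ : ∀ t, Integrable fun x => Real.exp (-En t x))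
    (E₀ : EuclideanSpace ℝ (Fin dx) → ℝ)
    (hE₀_meas : Measurable E₀)
    (hZ₀ : Integrable fun x => Real.exp (-E₀ x))
    (θ : EuclideanSpace ℝ (Fin dθ))
    (O : Set (EuclideanSpace ℝ (Fin dθ))) (hO : O ∈ nhds θ)
    (hdiff : ∀ x, ∀ t ∈ O, DifferentiableAt ℝ (fun s => En s x) t)
    (hKL_fin : ∀ t ∈ O,
      Integrable fun x => ebmDensity En t x * Real.log (ebmDensity En t x / refDensity E₀ x))
    (hdiff_int : ∀ t ∈ O, Integrable fun x => (E₀ x - En t x) * Real.exp (-En t x))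
    (g₁ g₂ : EuclideanSpace ℝ (Fin dx) → ℝ)
    (hg₁_int : Integrable g₁) (hg₂_int : Integrable g₂)
    (hdomZ : ∀ t ∈ O, ∀ x, ‖gradient (fun s => En s x) t‖ * Real.exp (-En t x) ≤ g₁ x)
    (hdomKL : ∀ t ∈ O, ∀ x,
      (1 + |E₀ x - En t x|) * ‖gradient (fun s => En s x) t‖ * Real.exp (-En t x) ≤ g₂ x)
    (hint₁ : Integrable fun x =>
      ((En θ x - E₀ x) * ebmDensity En θ x) • gradient (fun s => En s x) θ)
    (hint₂ : Integrable fun x => ebmDensity En θ x • gradient (fun s => En s x) θ)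
    (hint₃ : Integrable fun x => (En θ x - E₀ x) * ebmDensity En θ x) :
    HasGradientAt
      (fun t => ∫ x, ebmDensity En t x * Real.log (ebmDensity En t x / refDensity E₀ x))
      ((∫ x, ((En θ x - E₀ x) * ebmDensity En θ x) • gradient (fun s => En s x) θ) -
        (∫ x, (En θ x - E₀ x) * ebmDensity En θ x) •
          ∫ x, ebmDensity En θ x • gradient (fun s => En s x) θ) θ := by
  have hθO : θ ∈ O := mem_of_mem_nhds hO
  obtain ⟨ε, εpos, hball⟩ := Metric.mem_nhds_iff.mp hO
  have hZpos : ∀ t, (0:ℝ) < ∫ y, Real.exp (-En t y) := fun t => integral_exp_pos (hZ t)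
  set Z : EuclideanSpace ℝ (Fin dθ) → ℝ := fun t => ∫ y, Real.exp (-En t y) with hZd
  set G : EuclideanSpace ℝ (Fin dθ) → ℝ :=
    fun t => ∫ x, (E₀ x - En t x) * Real.exp (-En t x) with hGd
  have zne : Z θ ≠ 0 := ne_of_gt (hZpos θ)
  have hZ₀pos : (0:ℝ) < ∫ y, Real.exp (-E₀ y) := integral_exp_pos hZ₀
  have hdiffθ : ∀ x, DifferentiableAt ℝ (fun s => En s x) θ := fun x => hdiff x θ hθO
  have hgradmeas : Measurable fun x => gradient (fun s => En s x) θ :=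
    ebm_aux_grad_measurable En hEn_meas θ hdiffθ
  have hDmeas : Measurable fun x => fderiv ℝ (fun s => En s x) θ := by
    have h : (fun x => fderiv ℝ (fun s => En s x) θ)
        = fun x => (toDual ℝ (EuclideanSpace ℝ (Fin dθ))) (gradient (fun s => En s x) θ) := by
      funext x
      exact ((toDual ℝ _).apply_symm_apply _).symm
    rw [h]
    exact (toDual ℝ _).continuous.measurable.comp hgradmeas
  have hnorm_fd : ∀ (t : EuclideanSpace ℝ (Fin dθ)) x,
      ‖fderiv ℝ (fun s => En s x) t‖ = ‖gradient (fun s => En s x) t‖ := by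
    intro t x
    simp only [gradient]
    exact (LinearIsometryEquiv.norm_map _ _).symm
  have hns : ∀ (c : ℝ) (f : EuclideanSpace ℝ (Fin dθ) →L[ℝ] ℝ), ‖c • f‖ = |c| * ‖f‖ :=
    fun c f => by rw [norm_smul c f, Real.norm_eq_abs]
  have hnn : ∀ (f : EuclideanSpace ℝ (Fin dθ) →L[ℝ] ℝ), ‖-f‖ = ‖f‖ := fun f => norm_neg f
  -- derivative of Z
  have hZθ : HasFDerivAt Z
      (∫ x, Real.exp (-En θ x) • (-(fderiv ℝ (fun s => En s x) θ))) θ := by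
    apply hasFDerivAt_integral_of_dominated_of_fderiv_le
      (F := fun t x => Real.exp (-En t x))
      (F' := fun t x => Real.exp (-En t x) • (-(fderiv ℝ (fun s => En s x) t)))
      (bound := g₁) (Metric.ball_mem_nhds θ εpos)
    · exact Filter.Eventually.of_forall fun t =>
        ((hEn_meas t).neg.exp).aestronglyMeasurable
    · exact hZ θ
    · exact (((hEn_meas θ).neg.exp).smul hDmeas.neg).aestronglyMeasurable
    · refine Filter.Eventually.of_forall fun x t ht => ?_
      refine le_trans (le_of_eq ?_) (hdomZ t (hball ht) x)
      rw [hns, hnn, hnorm_fd, Real.abs_exp, mul_comm]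
    · exact hg₁_int
    · refine Filter.Eventually.of_forall fun x t ht => ?_
      exact ((hdiff x t (hball ht)).hasFDerivAt.neg).exp
  -- derivative of G
  have hGθ : HasFDerivAt G
      (∫ x, ((E₀ x - En θ x) • (Real.exp (-En θ x) • (-(fderiv ℝ (fun s => En s x) θ)))
        + Real.exp (-En θ x) • (-(fderiv ℝ (fun s => En s x) θ)))) θ := by
    apply hasFDerivAt_integral_of_dominated_of_fderiv_le
      (F := fun t x => (E₀ x - En t x) * Real.exp (-En t x))
      (F' := fun t x =>
        (E₀ x - En t x) • (Real.exp (-En t x) • (-(fderiv ℝ (fun s => En s x) t)))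
          + Real.exp (-En t x) • (-(fderiv ℝ (fun s => En s x) t)))
      (bound := g₂) (Metric.ball_mem_nhds θ εpos)
    · exact Filter.Eventually.of_forall fun t =>
        ((hE₀_meas.sub (hEn_meas t)).mul ((hEn_meas t).neg.exp)).aestronglyMeasurable
    · exact hdiff_int θ hθO
    · exact (((hE₀_meas.sub (hEn_meas θ)).smul
        (((hEn_meas θ).neg.exp).smul hDmeas.neg)).add
        (((hEn_meas θ).neg.exp).smul hDmeas.neg)).aestronglyMeasurable
    · refine Filter.Eventually.of_forall fun x t ht => ?_
      refine le_trans ?_ (hdomKL t (hball ht) x)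
      refine (norm_add_le _ _).trans (le_of_eq ?_)
      simp only [hns, hnn, hnorm_fd, Real.abs_exp]
      ring
    · exact hg₂_int
    · refine Filter.Eventually.of_forall fun x t ht => ?_
      have hc : HasFDerivAt (fun s => E₀ x - En s x)
          (-(fderiv ℝ (fun s => En s x) t)) t :=
        (hdiff x t (hball ht)).hasFDerivAt.const_sub _
      have hd : HasFDerivAt (fun s => Real.exp (-En s x))
          (Real.exp (-En t x) • (-(fderiv ℝ (fun s => En s x) t))) t :=
        ((hdiff x t (hball ht)).hasFDerivAt.neg).exp
      exact hc.mul hd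
  set C₀ : ℝ := Real.log (∫ y, Real.exp (-E₀ y)) with hC₀
  -- eventual equality of KL with explicit function
  have heq : (fun t => ∫ x, ebmDensity En t x * Real.log (ebmDensity En t x / refDensity E₀ x))
      =ᶠ[nhds θ] fun t => G t * (Z t)⁻¹ + (C₀ - Real.log (Z t)) := by
    filter_upwards [hO] with t ht
    have hZt : (0:ℝ) < Z t := hZpos t
    have hpt : ∀ x, ebmDensity En t x * Real.log (ebmDensity En t x / refDensity E₀ x)
        = (Z t)⁻¹ * ((E₀ x - En t x) * Real.exp (-En t x))
          + ((C₀ - Real.log (Z t)) * (Z t)⁻¹) * Real.exp (-En t x) := by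
      intro x
      have h1 : ebmDensity En t x = Real.exp (-En t x) / Z t := rfl
      have h2 : refDensity E₀ x = Real.exp (-E₀ x) / (∫ y, Real.exp (-E₀ y)) := rfl
      rw [h1, h2, Real.log_div (by positivity) (by positivity),
        Real.log_div (ne_of_gt (Real.exp_pos _)) (ne_of_gt hZt),
        Real.log_div (ne_of_gt (Real.exp_pos _)) (ne_of_gt hZ₀pos),
        Real.log_exp, Real.log_exp]
      rw [hC₀]
      field_simp
      ring
    calc (∫ x, ebmDensity En t x * Real.log (ebmDensity En t x / refDensity E₀ x))
        = ∫ x, ((Z t)⁻¹ * ((E₀ x - En t x) * Real.exp (-En t x))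
          + ((C₀ - Real.log (Z t)) * (Z t)⁻¹) * Real.exp (-En t x)) :=
        integral_congr_ae (Filter.Eventually.of_forall hpt)
      _ = (Z t)⁻¹ * G t + ((C₀ - Real.log (Z t)) * (Z t)⁻¹) * Z t := by
        rw [integral_add ((hdiff_int t ht).const_mul _) ((hZ t).const_mul _),
          integral_const_mul, integral_const_mul]
      _ = G t * (Z t)⁻¹ + (C₀ - Real.log (Z t)) := by
        field_simp
  -- derivative of the explicit function
  set Z' : EuclideanSpace ℝ (Fin dθ) →L[ℝ] ℝ :=
    ∫ x, Real.exp (-En θ x) • (-(fderiv ℝ (fun s => En s x) θ)) with hZ'd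
  set G' : EuclideanSpace ℝ (Fin dθ) →L[ℝ] ℝ :=
    ∫ x, ((E₀ x - En θ x) • (Real.exp (-En θ x) • (-(fderiv ℝ (fun s => En s x) θ)))
      + Real.exp (-En θ x) • (-(fderiv ℝ (fun s => En s x) θ))) with hG'd
  have hZinv : HasFDerivAt (fun t => (Z t)⁻¹) ((-((Z θ)^2)⁻¹) • Z') θ :=
    (hasDerivAt_inv zne).comp_hasFDerivAt θ hZθ
  have hdivd : HasFDerivAt (fun t => G t * (Z t)⁻¹)
      (G θ • ((-((Z θ)^2)⁻¹) • Z') + (Z θ)⁻¹ • G') θ := hGθ.mul hZinv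
  have hlogd : HasFDerivAt (fun t => C₀ - Real.log (Z t)) (-((Z θ)⁻¹ • Z')) θ :=
    (hZθ.log zne).const_sub C₀
  have hφ : HasFDerivAt (fun t => G t * (Z t)⁻¹ + (C₀ - Real.log (Z t)))
      ((G θ • ((-((Z θ)^2)⁻¹) • Z') + (Z θ)⁻¹ • G') + -((Z θ)⁻¹ • Z')) θ :=
    hdivd.add hlogd
  have hF : HasFDerivAt
      (fun t => ∫ x, ebmDensity En t x * Real.log (ebmDensity En t x / refDensity E₀ x))
      ((G θ • ((-((Z θ)^2)⁻¹) • Z') + (Z θ)⁻¹ • G') + -((Z θ)⁻¹ • Z')) θ :=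
    hφ.congr_of_eventuallyEq heq
  have hmain := hF.hasGradientAt
  -- now identify the gradient
  have hcomm : ∀ (ψ : EuclideanSpace ℝ (Fin dx) → (EuclideanSpace ℝ (Fin dθ) →L[ℝ] ℝ)),
      (toDual ℝ (EuclideanSpace ℝ (Fin dθ))).symm (∫ x, ψ x)
        = ∫ x, (toDual ℝ (EuclideanSpace ℝ (Fin dθ))).symm (ψ x) := fun ψ =>
    ((toDual ℝ (EuclideanSpace ℝ (Fin dθ))).symm.toLinearIsometry.integral_comp_comm ψ).symm
  have hebm : ∀ x, Real.exp (-En θ x) = Z θ * ebmDensity En θ x := by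
    intro x
    have : ebmDensity En θ x = Real.exp (-En θ x) / Z θ := rfl
    rw [this]
    field_simp
  have hgd : ∀ x, (toDual ℝ (EuclideanSpace ℝ (Fin dθ))).symm (fderiv ℝ (fun s => En s x) θ)
      = gradient (fun s => En s x) θ := fun x => rfl
  have hsymmZ' : (toDual ℝ (EuclideanSpace ℝ (Fin dθ))).symm Z'
      = (-(Z θ)) • ∫ x, ebmDensity En θ x • gradient (fun s => En s x) θ := by
    rw [hZ'd, hcomm, ← integral_smul]
    refine integral_congr_ae (Filter.Eventually.of_forall fun x => ?_)
    show (toDual ℝ (EuclideanSpace ℝ (Fin dθ))).symm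
        (Real.exp (-En θ x) • -fderiv ℝ (fun s => En s x) θ)
      = -Z θ • ebmDensity En θ x • gradient (fun s => En s x) θ
    rw [_root_.map_smul, _root_.map_neg, hgd, hebm x]
    module
  have hsymmG' : (toDual ℝ (EuclideanSpace ℝ (Fin dθ))).symm G'
      = (Z θ) • (∫ x, ((En θ x - E₀ x) * ebmDensity En θ x) • gradient (fun s => En s x) θ)
        + (-(Z θ)) • (∫ x, ebmDensity En θ x • gradient (fun s => En s x) θ) := by
    have h1 : Integrable (fun x =>
        Z θ • (((En θ x - E₀ x) * ebmDensity En θ x) • gradient (fun s => En s x) θ)) :=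
      hint₁.smul (Z θ)
    have h2 : Integrable (fun x =>
        (-(Z θ)) • (ebmDensity En θ x • gradient (fun s => En s x) θ)) :=
      hint₂.smul (-(Z θ))
    rw [hG'd, hcomm, ← integral_smul, ← integral_smul, ← integral_add h1 h2]
    refine integral_congr_ae (Filter.Eventually.of_forall fun x => ?_)
    show (toDual ℝ (EuclideanSpace ℝ (Fin dθ))).symm
        ((E₀ x - En θ x) • Real.exp (-En θ x) • -fderiv ℝ (fun s => En s x) θ
          + Real.exp (-En θ x) • -fderiv ℝ (fun s => En s x) θ)
      = Z θ • (((En θ x - E₀ x) * ebmDensity En θ x) • gradient (fun s => En s x) θ)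
        + (-(Z θ)) • (ebmDensity En θ x • gradient (fun s => En s x) θ)
    rw [_root_.map_add, _root_.map_smul, _root_.map_smul, _root_.map_neg, hgd, hebm x]
    module
  have hGval : G θ = (-(Z θ)) * ∫ x, (En θ x - E₀ x) * ebmDensity En θ x := by
    rw [hGd, ← integral_const_mul]
    refine integral_congr_ae (Filter.Eventually.of_forall fun x => ?_)
    show (E₀ x - En θ x) * Real.exp (-En θ x) = -Z θ * ((En θ x - E₀ x) * ebmDensity En θ x)
    rw [hebm x]
    ring
  have hgoal : ((∫ x, ((En θ x - E₀ x) * ebmDensity En θ x) • gradient (fun s => En s x) θ)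
        - (∫ x, (En θ x - E₀ x) * ebmDensity En θ x) •
          ∫ x, ebmDensity En θ x • gradient (fun s => En s x) θ)
      = (toDual ℝ (EuclideanSpace ℝ (Fin dθ))).symm
        ((G θ • ((-((Z θ)^2)⁻¹) • Z') + (Z θ)⁻¹ • G') + -((Z θ)⁻¹ • Z')) := by
    rw [_root_.map_add, _root_.map_add, _root_.map_smul, _root_.map_smul, _root_.map_smul,
      _root_.map_neg, _root_.map_smul, hsymmZ', hsymmG', hGval]
    match_scalars <;> field_simp <;> ring
  exact hgoal ▸ hmain
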